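/- Let u, v ∈ EuclideanSpace ℝ (Fin 3). Define R₁ := (1/2)•( (E(u)+E*(u))∘(E(v)+E*(v)) − (E(v)+E*(v))∘(E(u)+E*(u)) ) and R₂ := (1/2)•( (E(u)−E*(u))∘(E(v)−E*(v)) − (E(v)−E*(v))∘(E(u)−E*(u)) ). Then R₁∘R₁ = R₂∘R₂ = (⟨u,v⟩² − ‖u‖²‖v‖²) • id. In particular, if u and v are linearly independent then R₁² = R₂² = −‖u∧v‖² • id is a negative multiple of the identity. -/

import Mathlib

open scoped RealInnerProductSpace

noncomputable section

private lemma key_rot {S : Type*} [Ring S] [Module ℝ S] [SMulCommClass ℝ S S]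
    [IsScalarTower ℝ S S]
    (A B C D : S) (p q s : ℝ)
    (hA : A * A = 0) (hB : B * B = 0) (hC : C * C = 0) (hD : D * D = 0)
    (hBA : B * A = -(A * B)) (hDC : D * C = -(C * D))
    (hCA : C * A = p • (1 : S) - A * C)
    (hCB : C * B = s • (1 : S) - B * C)
    (hDA : D * A = s • (1 : S) - A * D)
    (hDB : D * B = q • (1 : S) - B * D) :
    ((1 / 2 : ℝ) • ((A + C) * (B + D) - (B + D) * (A + C))) *
      ((1 / 2 : ℝ) • ((A + C) * (B + D) - (B + D) * (A + C))) =
      (s ^ 2 - p * q) • (1 : S) := by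
  have hT : (1 / 2 : ℝ) • ((A + C) * (B + D) - (B + D) * (A + C))
      = A * B + C * D + A * D - B * C := by
    have : (A + C) * (B + D) - (B + D) * (A + C)
        = (2:ℝ) • (A * B + C * D + A * D - B * C) := by
      simp only [mul_add, add_mul, hBA, hDC, hCA, hCB, hDA, hDB]
      module
    rw [this, smul_smul]
    norm_num
  rw [hT]
  have hA' : ∀ x : S, A * (A * x) = 0 := fun x => by rw [← mul_assoc, hA, zero_mul]
  have hB' : ∀ x : S, B * (B * x) = 0 := fun x => by rw [← mul_assoc, hB, zero_mul]
  have hC' : ∀ x : S, C * (C * x) = 0 := fun x => by rw [← mul_assoc, hC, zero_mul]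
  have hD' : ∀ x : S, D * (D * x) = 0 := fun x => by rw [← mul_assoc, hD, zero_mul]
  have hBA' : ∀ x : S, B * (A * x) = -(A * (B * x)) := fun x => by
    rw [← mul_assoc, hBA, neg_mul, mul_assoc]
  have hDC' : ∀ x : S, D * (C * x) = -(C * (D * x)) := fun x => by
    rw [← mul_assoc, hDC, neg_mul, mul_assoc]
  have hCA' : ∀ x : S, C * (A * x) = p • x - A * (C * x) := fun x => by
    rw [← mul_assoc, hCA, sub_mul, smul_mul_assoc, one_mul, mul_assoc]
  have hCB' : ∀ x : S, C * (B * x) = s • x - B * (C * x) := fun x => by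
    rw [← mul_assoc, hCB, sub_mul, smul_mul_assoc, one_mul, mul_assoc]
  have hDA' : ∀ x : S, D * (A * x) = s • x - A * (D * x) := fun x => by
    rw [← mul_assoc, hDA, sub_mul, smul_mul_assoc, one_mul, mul_assoc]
  have hDB' : ∀ x : S, D * (B * x) = q • x - B * (D * x) := fun x => by
    rw [← mul_assoc, hDB, sub_mul, smul_mul_assoc, one_mul, mul_assoc]
  simp only [mul_add, add_mul, mul_sub, sub_mul, mul_assoc, mul_smul_comm, smul_mul_assoc,
    hA', hB', hC', hD', hBA', hDC', hCA', hCB', hDA', hDB', hA, hB, hC, hD,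
    hBA, hDC, hCA, hCB, hDA, hDB, mul_one, sub_zero, zero_sub,
    mul_zero, zero_mul, smul_zero, mul_neg, neg_mul, smul_neg, neg_neg,
    smul_sub, smul_add, smul_smul]
  module

/-- Left exterior multiplication by a vector on the exterior algebra of `ℝ³`. -/
def wedgeOp (v : EuclideanSpace ℝ (Fin 3)) :
    ExteriorAlgebra ℝ (EuclideanSpace ℝ (Fin 3)) →ₗ[ℝ]
      ExteriorAlgebra ℝ (EuclideanSpace ℝ (Fin 3)) :=
  LinearMap.mulLeft ℝ (ExteriorAlgebra.ι ℝ v)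

/-- Left contraction (interior product) along the functional `⟪v, ·⟫`. -/
def contrOp (v : EuclideanSpace ℝ (Fin 3)) :
    ExteriorAlgebra ℝ (EuclideanSpace ℝ (Fin 3)) →ₗ[ℝ]
      ExteriorAlgebra ℝ (EuclideanSpace ℝ (Fin 3)) :=
  CliffordAlgebra.contractLeft (innerₗ (EuclideanSpace ℝ (Fin 3)) v)

private lemma wedge_sq (u : EuclideanSpace ℝ (Fin 3)) : wedgeOp u * wedgeOp u = 0 := by
  refine LinearMap.ext fun x => ?_
  simp [wedgeOp, ExteriorAlgebra.ι_sq_zero, Module.End.mul_apply, ← mul_assoc]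

private lemma wedge_anticomm (u v : EuclideanSpace ℝ (Fin 3)) :
    wedgeOp v * wedgeOp u = -(wedgeOp u * wedgeOp v) := by
  refine LinearMap.ext fun x => ?_
  have h := ExteriorAlgebra.ι_add_mul_swap (R := ℝ) v u
  simp only [wedgeOp, Module.End.mul_apply, LinearMap.mulLeft_apply, LinearMap.neg_apply,
    ← mul_assoc]
  rw [show ExteriorAlgebra.ι ℝ v * ExteriorAlgebra.ι ℝ u
      = -(ExteriorAlgebra.ι ℝ u * ExteriorAlgebra.ι ℝ v) from eq_neg_of_add_eq_zero_left h]
  simp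

private lemma contr_sq (u : EuclideanSpace ℝ (Fin 3)) : contrOp u * contrOp u = 0 := by
  refine LinearMap.ext fun x => ?_
  simp [contrOp, Module.End.mul_apply, CliffordAlgebra.contractLeft_contractLeft]

private lemma contr_anticomm (u v : EuclideanSpace ℝ (Fin 3)) :
    contrOp v * contrOp u = -(contrOp u * contrOp v) := by
  refine LinearMap.ext fun x => ?_
  simp only [contrOp, Module.End.mul_apply, LinearMap.neg_apply]
  exact CliffordAlgebra.contractLeft_comm _ _ x

private lemma contr_wedge (w a : EuclideanSpace ℝ (Fin 3)) :
    contrOp w * wedgeOp a = ⟪w, a⟫ • (1 : Module.End ℝ _) - wedgeOp a * contrOp w := by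
  refine LinearMap.ext fun x => ?_
  simp only [contrOp, wedgeOp, Module.End.mul_apply, LinearMap.mulLeft_apply,
    LinearMap.sub_apply, LinearMap.smul_apply, Module.End.one_apply,
    CliffordAlgebra.contractLeft_ι_mul]
  rw [show ((innerₗ (EuclideanSpace ℝ (Fin 3)) w) a) = ⟪w, a⟫ from rfl]

/-- The operator `R₁ = (1/2)[E(u)+E*(u), E(v)+E*(v)]`. -/
def rotGen1 (u v : EuclideanSpace ℝ (Fin 3)) :
    ExteriorAlgebra ℝ (EuclideanSpace ℝ (Fin 3)) →ₗ[ℝ]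
      ExteriorAlgebra ℝ (EuclideanSpace ℝ (Fin 3)) :=
  (1 / 2 : ℝ) • ((wedgeOp u + contrOp u) ∘ₗ (wedgeOp v + contrOp v)
    - (wedgeOp v + contrOp v) ∘ₗ (wedgeOp u + contrOp u))

/-- The operator `R₂ = (1/2)[E(u)−E*(u), E(v)−E*(v)]`. -/
def rotGen2 (u v : EuclideanSpace ℝ (Fin 3)) :
    ExteriorAlgebra ℝ (EuclideanSpace ℝ (Fin 3)) →ₗ[ℝ]
      ExteriorAlgebra ℝ (EuclideanSpace ℝ (Fin 3)) :=
  (1 / 2 : ℝ) • ((wedgeOp u - contrOp u) ∘ₗ (wedgeOp v - contrOp v)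
    - (wedgeOp v - contrOp v) ∘ₗ (wedgeOp u - contrOp u))

/-- `R₁² = R₂² = (⟨u,v⟩² − ‖u‖²‖v‖²) • id`. -/
theorem rotGen_sq (u v : EuclideanSpace ℝ (Fin 3)) :
    rotGen1 u v ∘ₗ rotGen1 u v = (⟪u, v⟫ ^ 2 - ‖u‖ ^ 2 * ‖v‖ ^ 2) • LinearMap.id ∧
      rotGen2 u v ∘ₗ rotGen2 u v = (⟪u, v⟫ ^ 2 - ‖u‖ ^ 2 * ‖v‖ ^ 2) • LinearMap.id := by
  set A := wedgeOp u
  set B := wedgeOp v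
  set C := contrOp u
  set D := contrOp v
  have hA := wedge_sq u
  have hB := wedge_sq v
  have hC := contr_sq u
  have hD := contr_sq v
  have hBA := wedge_anticomm u v
  have hDC := contr_anticomm u v
  have hCA := contr_wedge u u
  have hCB := contr_wedge u v
  have hDA := contr_wedge v u
  have hDB := contr_wedge v v
  rw [real_inner_comm] at hDA
  have hp : ⟪u, u⟫ = ‖u‖ ^ 2 := real_inner_self_eq_norm_sq u
  have hq : ⟪v, v⟫ = ‖v‖ ^ 2 := real_inner_self_eq_norm_sq v
  rw [hp] at hCA
  rw [hq] at hDB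
  constructor
  · have := key_rot A B C D (‖u‖ ^ 2) (‖v‖ ^ 2) ⟪u, v⟫
      hA hB hC hD hBA hDC hCA hCB hDA hDB
    exact this
  · have hC' : (-C) * (-C) = 0 := by rw [show (-C) * (-C) = C * C from neg_mul_neg C C, hC]
    have hD' : (-D) * (-D) = 0 := by rw [show (-D) * (-D) = D * D from neg_mul_neg D D, hD]
    have hDC' : (-D) * (-C) = -((-C) * (-D)) := by
      rw [show (-D) * (-C) = D * C from neg_mul_neg D C, show (-C) * (-D) = C * D from neg_mul_neg C D, hDC]
    have hCA' : (-C) * A = (-(‖u‖ ^ 2)) • (1 : Module.End ℝ _) - A * (-C) := by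
      rw [show (-C) * A = -(C * A) from neg_mul C A, hCA, show A * (-C) = -(A * C) from mul_neg A C]; module
    have hCB' : (-C) * B = (-⟪u, v⟫) • (1 : Module.End ℝ _) - B * (-C) := by
      rw [show (-C) * B = -(C * B) from neg_mul C B, hCB, show B * (-C) = -(B * C) from mul_neg B C]; module
    have hDA' : (-D) * A = (-⟪u, v⟫) • (1 : Module.End ℝ _) - A * (-D) := by
      rw [show (-D) * A = -(D * A) from neg_mul D A, hDA, show A * (-D) = -(A * D) from mul_neg A D]; module
    have hDB' : (-D) * B = (-(‖v‖ ^ 2)) • (1 : Module.End ℝ _) - B * (-D) := by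
      rw [show (-D) * B = -(D * B) from neg_mul D B, hDB, show B * (-D) = -(B * D) from mul_neg B D]; module
    have := key_rot A B (-C) (-D) (-(‖u‖ ^ 2)) (-(‖v‖ ^ 2)) (-⟪u, v⟫)
      hA hB hC' hD' hBA hDC' hCA' hCB' hDA' hDB'
    simp only [← sub_eq_add_neg] at this
    have hsc : ((-⟪u, v⟫) ^ 2 - -(‖u‖ ^ 2) * -(‖v‖ ^ 2))
        = ⟪u, v⟫ ^ 2 - ‖u‖ ^ 2 * ‖v‖ ^ 2 := by ring
    rw [hsc] at this
    exact this

end
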